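/- (Bohr's theorem, positive part.) Let f(z) = Σ_{k=0}^∞ c_k z^k be a power series with complex coefficients that converges for every z in the open unit disk {z ∈ ℂ : |z| < 1}, and suppose |f(z)| < 1 for all z in the unit disk. Then Σ_{k=0}^∞ |c_k z^k| < 1 for every z with |z| < 1/3. -/

import Mathlib

open Metric Finset Function

lemma bohr_aux_summable (c : ℕ → ℂ)
    (hconv : ∀ z : ℂ, ‖z‖ < 1 → Summable (fun k => c k * z ^ k))
    {z : ℂ} (hz : ‖z‖ < 1) : Summable (fun k => ‖c k * z ^ k‖) := by
  set s : ℝ := ‖z‖ with hs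
  have hs0 : 0 ≤ s := norm_nonneg z
  set r : ℝ := (1 + s) / 2 with hr
  have hsr : s < r := by simp [hr]; linarith
  have hr1 : r < 1 := by simp [hr]; linarith
  have hr0 : 0 < r := by positivity
  have hsum := hconv (r : ℂ) (by rw [Complex.norm_real, Real.norm_eq_abs, abs_of_pos hr0]; exact hr1)
  have hten : Filter.Tendsto (fun k => c k * (r:ℂ) ^ k) Filter.atTop (nhds 0) :=
    hsum.tendsto_atTop_zero
  obtain ⟨M, hM⟩ := hten.norm.bddAbove_range.imp (fun M hM => fun n => hM ⟨n, rfl⟩)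
  have key : ∀ k, ‖c k * z ^ k‖ ≤ M * (s / r) ^ k := by
    intro k
    have h1 : ‖c k‖ * r ^ k ≤ M := by
      have := hM k
      simpa [norm_mul, norm_pow, Complex.norm_real, Real.norm_eq_abs, abs_of_pos hr0] using this
    have h2 : ‖c k‖ ≤ M / r ^ k := by
      rw [le_div_iff₀ (by positivity)]; exact h1
    calc ‖c k * z ^ k‖ = ‖c k‖ * s ^ k := by simp [norm_mul, norm_pow, hs]
    _ ≤ (M / r ^ k) * s ^ k := by gcongr
    _ = M * (s / r) ^ k := by rw [div_pow s r k, div_mul_eq_mul_div, mul_div_assoc]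
  refine Summable.of_nonneg_of_le (fun k => norm_nonneg _) key ?_
  exact (summable_geometric_of_lt_one (by positivity) (by
    rw [div_lt_one hr0]; exact hsr)).mul_left M

lemma bohr_aux_fps (c : ℕ → ℂ)
    (hconv : ∀ z : ℂ, ‖z‖ < 1 → Summable (fun k => c k * z ^ k)) :
    HasFPowerSeriesOnBall (fun z => ∑' k, c k * z ^ k)
      (FormalMultilinearSeries.ofScalars ℂ c) 0 1 := by
  set p := FormalMultilinearSeries.ofScalars ℂ c with hp
  have hrad : 1 ≤ p.radius := by
    apply ENNReal.le_of_forall_nnreal_lt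
    intro r hr
    apply p.le_radius_of_summable
    have hr1 : ‖((r:ℝ) : ℂ)‖ < 1 := by
      rw [Complex.norm_real, Real.norm_eq_abs, abs_of_nonneg r.coe_nonneg]
      exact_mod_cast hr
    have := bohr_aux_summable c hconv hr1
    apply this.congr
    intro n
    simp only [norm_mul, norm_pow, Complex.norm_real, Real.norm_eq_abs,
      abs_of_nonneg r.coe_nonneg, hp, FormalMultilinearSeries.ofScalars_norm]
  have h := p.hasFPowerSeriesOnBall (lt_of_lt_of_le one_pos hrad)
  have h1 := h.mono one_pos hrad
  have hsum : ∀ z : ℂ, ‖z‖ < 1 → p.sum z = ∑' k, c k * z ^ k := by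
    intro z hz
    rw [FormalMultilinearSeries.sum]
    apply tsum_congr
    intro n
    show (FormalMultilinearSeries.ofScalars ℂ c n) (fun _ => z) = _
    rw [FormalMultilinearSeries.ofScalars_apply_eq]
    simp [smul_eq_mul, mul_comm]
  refine h1.congr ?_
  intro z hz
  rw [EMetric.mem_ball, edist_zero_right, ← ENNReal.ofReal_one] at hz
  have h2 : ‖z‖₊ < 1 := by rw [enorm_eq_nnnorm] at hz; exact_mod_cast hz
  exact hsum z (by exact_mod_cast h2)

lemma bohr_mobius_sq (a b : ℂ) :
    Complex.normSq (1 - (starRingEnd ℂ) a * b) - Complex.normSq (b - a)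
      = (1 - Complex.normSq a) * (1 - Complex.normSq b) := by
  simp only [Complex.normSq_apply, Complex.sub_re, Complex.sub_im, Complex.mul_re,
    Complex.mul_im, Complex.one_re, Complex.one_im, Complex.conj_re, Complex.conj_im]
  ring

lemma bohr_mobius_lt {a b : ℂ} (ha : ‖a‖ < 1) (hb : ‖b‖ < 1) :
    ‖b - a‖ < ‖1 - (starRingEnd ℂ) a * b‖ := by
  have h1 : Complex.normSq a < 1 := by
    rw [← Complex.sq_norm]; nlinarith [norm_nonneg a]
  have h2 : Complex.normSq b < 1 := by
    rw [← Complex.sq_norm]; nlinarith [norm_nonneg b]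
  have key := bohr_mobius_sq a b
  have hlt : Complex.normSq (b - a) < Complex.normSq (1 - (starRingEnd ℂ) a * b) := by
    nlinarith [Complex.normSq_nonneg (b - a)]
  apply lt_of_pow_lt_pow_left₀ 2 (norm_nonneg (1 - (starRingEnd ℂ) a * b))
  rw [Complex.sq_norm, Complex.sq_norm]
  exact hlt

lemma bohr_mobius_ne {a b : ℂ} (ha : ‖a‖ < 1) (hb : ‖b‖ < 1) :
    1 - (starRingEnd ℂ) a * b ≠ 0 := by
  intro h
  have := bohr_mobius_lt ha hb
  rw [h] at this
  simp only [norm_zero] at this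
  exact absurd this (not_lt.mpr (norm_nonneg _))

lemma bohr_tsum_zero (c : ℕ → ℂ) : ∑' k, c k * (0:ℂ) ^ k = c 0 := by
  rw [tsum_eq_single 0]
  · simp
  · intro k hk
    simp [zero_pow hk]

lemma bohr_coeff_one (c : ℕ → ℂ)
    (hconv : ∀ z : ℂ, ‖z‖ < 1 → Summable (fun k => c k * z ^ k))
    (hbound : ∀ z : ℂ, ‖z‖ < 1 → ‖∑' k, c k * z ^ k‖ < 1) :
    ‖c 1‖ ≤ 1 - ‖c 0‖ ^ 2 := by
  set f : ℂ → ℂ := fun z => ∑' k, c k * z ^ k with hfdef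
  set a : ℂ := c 0 with hadef
  have hf0 : f 0 = a := bohr_tsum_zero c
  have ha : ‖a‖ < 1 := by
    have := hbound 0 (by norm_num)
    rwa [bohr_tsum_zero c] at this
  have hfz : ∀ z ∈ ball (0:ℂ) 1, ‖f z‖ < 1 := by
    intro z hz
    exact hbound z (by simpa [mem_ball, dist_zero_right] using hz)
  have hfps := bohr_aux_fps c hconv
  have hball : Metric.eball (0:ℂ) 1 = ball (0:ℂ) 1 := by
    rw [← ENNReal.ofReal_one, Metric.emetric_ball]
  have hdiff : DifferentiableOn ℂ f (ball (0:ℂ) 1) := by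
    have := hfps.differentiableOn
    rwa [hball] at this
  have hfd : HasDerivAt f (c 1) 0 := by
    have h := hfps.hasFPowerSeriesAt.hasDerivAt
    have : (FormalMultilinearSeries.ofScalars ℂ c 1) (fun _ => (1:ℂ)) = c 1 := by
      rw [FormalMultilinearSeries.ofScalars_apply_eq]
      simp
    rwa [this] at h
  -- the Möbius transform
  set g : ℂ → ℂ := fun z => (f z - a) / (1 - (starRingEnd ℂ) a * f z) with hgdef
  have hDne : ∀ z ∈ ball (0:ℂ) 1, 1 - (starRingEnd ℂ) a * f z ≠ 0 := fun z hz =>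
    bohr_mobius_ne ha (hfz z hz)
  have hgdiff : DifferentiableOn ℂ g (ball (0:ℂ) 1) := by
    apply DifferentiableOn.div
    · exact hdiff.sub_const a
    · exact (differentiableOn_const 1).sub ((differentiableOn_const _).mul hdiff)
    · exact hDne
  have hg0 : g 0 = 0 := by
    simp [hgdef, hf0]
  have hmaps : Set.MapsTo g (ball (0:ℂ) 1) (ball (g 0) 1) := by
    rw [hg0]
    intro z hz
    rw [mem_ball_zero_iff]
    rw [hgdef]
    simp only
    rw [norm_div, div_lt_one (by
      rw [norm_pos_iff]; exact hDne z hz)]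
    exact bohr_mobius_lt ha (hfz z hz)
  have hschwarz := Complex.norm_deriv_le_div_of_mapsTo_ball hgdiff (hmaps.mono_right ball_subset_closedBall) one_pos
  -- compute deriv g 0
  set u : ℂ := 1 - (starRingEnd ℂ) a * a with hudef
  have hune : u ≠ 0 := by
    have := bohr_mobius_ne ha ha
    rwa [← hudef] at this
  have hN : HasDerivAt (fun z => f z - a) (c 1) 0 := hfd.sub_const a
  have hD : HasDerivAt (fun z => 1 - (starRingEnd ℂ) a * f z) (-((starRingEnd ℂ) a * c 1)) 0 := by
    have := (hfd.const_mul ((starRingEnd ℂ) a)).const_sub 1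
    simpa using this
  have hgd : HasDerivAt g ((c 1 * (1 - (starRingEnd ℂ) a * f 0)
      - (f 0 - a) * -((starRingEnd ℂ) a * c 1)) / (1 - (starRingEnd ℂ) a * f 0) ^ 2) 0 := by
    exact hN.div hD (by rw [hf0]; exact hune)
  have hderiv : deriv g 0 = c 1 / u := by
    rw [hgd.deriv, hf0, ← hudef]
    rw [sub_self, zero_mul, sub_zero, sq, ← div_div, mul_div_cancel_right₀ _ hune]
  rw [hderiv] at hschwarz
  have hunorm : ‖u‖ = 1 - ‖a‖ ^ 2 := by
    have h1 : u = ((1 - ‖a‖ ^ 2 : ℝ) : ℂ) := by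
      rw [hudef, mul_comm, Complex.mul_conj']
      push_cast
      ring
    rw [h1, Complex.norm_real, Real.norm_eq_abs, abs_of_nonneg (by nlinarith [norm_nonneg a])]
  rw [norm_div, hunorm, div_le_div_iff₀ (by nlinarith [norm_nonneg a]) one_pos] at hschwarz
  linarith [hschwarz]

lemma bohr_root_exists {k : ℕ} (hk : k ≠ 0) {w : ℂ} (hw : ‖w‖ < 1) :
    ∃ z : ℂ, z ^ k = w ∧ ‖z‖ < 1 := by
  rcases eq_or_ne w 0 with rfl | hw0
  · exact ⟨0, by simp [zero_pow hk], by norm_num⟩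
  · refine ⟨Complex.exp (Complex.log w / k), ?_, ?_⟩
    · rw [← Complex.exp_nat_mul]
      rw [mul_div_cancel₀ _ (by exact_mod_cast hk : (k:ℂ) ≠ 0)]
      exact Complex.exp_log hw0
    · rw [Complex.norm_exp]
      have hre : (Complex.log w / k).re = Real.log ‖w‖ / k := by
        rw [Complex.div_re]
        simp [Complex.log_re, Complex.normSq_natCast]
        have hkr : (k:ℝ) ≠ 0 := by exact_mod_cast hk
        field_simp
      rw [hre]
      have hlog : Real.log ‖w‖ < 0 :=
        Real.log_neg (by simpa [norm_pos_iff] using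
          (norm_pos_iff.mpr hw0)) (by simpa using hw)
      have : Real.log ‖w‖ / k < 0 := by
        apply div_neg_of_neg_of_pos hlog
        exact_mod_cast Nat.pos_of_ne_zero hk
      calc Real.exp _ < Real.exp 0 := Real.exp_lt_exp.mpr this
      _ = 1 := Real.exp_zero

lemma bohr_subconv (c : ℕ → ℂ) {k : ℕ} (hk : k ≠ 0)
    (hconv : ∀ z : ℂ, ‖z‖ < 1 → Summable (fun k => c k * z ^ k))
    {z : ℂ} (hz : ‖z‖ < 1) : Summable (fun m => c (k * m) * z ^ (k * m)) := by
  apply Summable.of_norm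
  have h := bohr_aux_summable c hconv hz
  have hinj : Function.Injective (fun m : ℕ => k * m) := fun a b hab => by
    exact Nat.eq_of_mul_eq_mul_left (Nat.pos_of_ne_zero hk) hab
  exact h.comp_injective hinj

lemma bohr_average (c : ℕ → ℂ) {k : ℕ} (hk : k ≠ 0)
    (hconv : ∀ z : ℂ, ‖z‖ < 1 → Summable (fun k => c k * z ^ k))
    (hbound : ∀ z : ℂ, ‖z‖ < 1 → ‖∑' k, c k * z ^ k‖ < 1) :
    ∀ w : ℂ, ‖w‖ < 1 → ‖∑' m, c (k * m) * w ^ m‖ < 1 := by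
  intro w hw
  obtain ⟨z, hzk, hz⟩ := bohr_root_exists hk hw
  set ζ : ℂ := Complex.exp (2 * Real.pi * Complex.I / k) with hζdef
  have hprim : IsPrimitiveRoot ζ k := by
    have := Complex.isPrimitiveRoot_exp k hk
    convert this using 2
  have hζnorm : ‖ζ‖ = 1 := by
    rw [hζdef, show (2 * Real.pi * Complex.I / k : ℂ) = ((2 * Real.pi / k : ℝ) : ℂ) * Complex.I by
      push_cast; ring]
    exact Complex.norm_exp_ofReal_mul_I _
  have hζjz : ∀ j : ℕ, ‖ζ ^ j * z‖ = ‖z‖ := by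
    intro j
    rw [norm_mul, norm_pow, hζnorm, one_pow, one_mul]
  -- the function F
  set F : ℕ → ℂ := fun n => c n * z ^ n * (if k ∣ n then (k : ℂ) else 0) with hFdef
  have hS : ∀ n : ℕ, (∑ j ∈ Finset.range k, (ζ ^ n) ^ j) = (if k ∣ n then (k : ℂ) else 0) := by
    intro n
    by_cases hdvd : k ∣ n
    · have h1 : ζ ^ n = 1 := (hprim.pow_eq_one_iff_dvd n).mpr hdvd
      simp [h1, hdvd]
    · have hne : ζ ^ n ≠ 1 := fun h => hdvd ((hprim.pow_eq_one_iff_dvd n).mp h)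
      rw [geom_sum_eq hne]
      have h2 : (ζ ^ n) ^ k = 1 := by
        rw [← pow_mul, mul_comm, pow_mul, hprim.pow_eq_one, one_pow]
      rw [h2]
      simp [hdvd]
  have key : ∑ j ∈ Finset.range k, ∑' n, c n * (ζ ^ j * z) ^ n = ∑' n, F n := by
    rw [← Summable.tsum_finsetSum (fun j _ => hconv _ (by rw [hζjz j]; exact hz))]
    apply tsum_congr
    intro n
    have hterm : ∀ j, c n * (ζ ^ j * z) ^ n = c n * z ^ n * (ζ ^ n) ^ j := by
      intro j
      rw [mul_pow, ← pow_mul, ← pow_mul, mul_comm j n, mul_comm]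
      ring
    rw [Finset.sum_congr rfl (fun j _ => hterm j), ← Finset.mul_sum, hS n, hFdef]
  -- F summable
  have hFsum : Summable F := by
    apply Summable.of_norm
    have h := bohr_aux_summable c hconv hz
    apply Summable.of_nonneg_of_le (fun n => norm_nonneg _) ?_ (h.mul_left (k:ℝ))
    intro n
    rw [hFdef]
    by_cases hdvd : k ∣ n
    · simp only [if_pos hdvd]
      rw [norm_mul, Complex.norm_natCast, mul_comm]
    · simp only [if_neg hdvd, mul_zero, norm_zero]
      positivity
  -- restrict F to multiples of k
  have hinj : Function.Injective (fun m : ℕ => k * m) := fun a b hab => by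
    exact Nat.eq_of_mul_eq_mul_left (Nat.pos_of_ne_zero hk) hab
  have hsupp : ∀ x, x ∉ Set.range (fun m : ℕ => k * m) → F x = 0 := by
    intro x hx
    have hnd : ¬ k ∣ x := by
      rintro ⟨m, rfl⟩
      exact hx ⟨m, rfl⟩
    simp [hFdef, hnd]
  have hres : ∑' m, F (k * m) = ∑' n, F n := by
    have h2 := (hinj.hasSum_iff hsupp).mpr hFsum.hasSum
    exact h2.tsum_eq
  have hFk : ∀ m, F (k * m) = (k : ℂ) * (c (k * m) * z ^ (k * m)) := by
    intro m
    simp only [hFdef, if_pos (Dvd.intro m rfl)]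
    ring
  have hTs : Summable (fun m => c (k * m) * z ^ (k * m)) := bohr_subconv c hk hconv hz
  have hmain : (k : ℂ) * ∑' m, c (k * m) * w ^ m
      = ∑ j ∈ Finset.range k, ∑' n, c n * (ζ ^ j * z) ^ n := by
    rw [key, ← hres]
    rw [tsum_congr hFk, tsum_mul_left]
    congr 1
    apply tsum_congr
    intro m
    rw [← hzk, ← pow_mul]
  -- bound
  have hbnd : ‖∑ j ∈ Finset.range k, ∑' n, c n * (ζ ^ j * z) ^ n‖ < k := by
    calc ‖∑ j ∈ Finset.range k, ∑' n, c n * (ζ ^ j * z) ^ n‖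
        ≤ ∑ j ∈ Finset.range k, ‖∑' n, c n * (ζ ^ j * z) ^ n‖ := norm_sum_le _ _
    _ < ∑ _j ∈ Finset.range k, 1 := by
        apply Finset.sum_lt_sum_of_nonempty (Finset.nonempty_range_iff.mpr hk)
        intro j _
        exact hbound _ (by rw [hζjz j]; exact hz)
    _ = k := by simp
  rw [← hmain] at hbnd
  rw [norm_mul, Complex.norm_natCast] at hbnd
  have hkpos : (0:ℝ) < k := by exact_mod_cast Nat.pos_of_ne_zero hk
  nlinarith [hbnd, hkpos, norm_nonneg (∑' m, c (k * m) * w ^ m)]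


theorem bohr_positive (c : ℕ → ℂ)
    (hconv : ∀ z : ℂ, ‖z‖ < 1 → Summable (fun k => c k * z ^ k))
    (hbound : ∀ z : ℂ, ‖z‖ < 1 → ‖∑' k, c k * z ^ k‖ < 1) :
    ∀ z : ℂ, ‖z‖ < 1 / 3 →
      Summable (fun k => ‖c k * z ^ k‖) ∧ ∑' k, ‖c k * z ^ k‖ < 1 := by
  intro z hz
  have hz1 : ‖z‖ < 1 := lt_trans hz (by norm_num)
  have hsum := bohr_aux_summable c hconv hz1
  refine ⟨hsum, ?_⟩
  set s : ℝ := ‖z‖ with hsdef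
  set a : ℝ := ‖c 0‖ with hadef
  have ha : a < 1 := by
    have := hbound 0 (by norm_num)
    rwa [bohr_tsum_zero c] at this
  have ha0 : 0 ≤ a := norm_nonneg _
  have hcoeff : ∀ n : ℕ, ‖c (n + 1)‖ ≤ 1 - a ^ 2 := by
    intro n
    set k : ℕ := n + 1 with hkdef
    have hk : k ≠ 0 := Nat.succ_ne_zero n
    set d : ℕ → ℂ := fun m => c (k * m) with hddef
    have hdconv : ∀ w : ℂ, ‖w‖ < 1 → Summable (fun m => d m * w ^ m) := by
      intro w hw
      obtain ⟨z', hz'k, hz'⟩ := bohr_root_exists hk hw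
      have hsub := bohr_subconv c hk hconv hz'
      apply hsub.congr
      intro m
      rw [hddef, ← hz'k, ← pow_mul]
    have hdbound : ∀ w : ℂ, ‖w‖ < 1 → ‖∑' m, d m * w ^ m‖ < 1 := fun w hw =>
      bohr_average c hk hconv hbound w hw
    have hco := bohr_coeff_one d hdconv hdbound
    have hd1 : d 1 = c k := by rw [hddef]; norm_num
    have hd0 : d 0 = c 0 := by rw [hddef]; norm_num
    rw [hd1, hd0] at hco
    exact hco
  have hs0 : 0 ≤ s := norm_nonneg z
  have h1s : 0 < 1 - s := by simp only [hsdef] at *; linarith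
  -- split off first term
  rw [Summable.tsum_eq_zero_add hsum]
  have hfirst : ‖c 0 * z ^ 0‖ = a := by simp [hadef]
  rw [hfirst]
  have hterm : ∀ n : ℕ, ‖c (n + 1) * z ^ (n + 1)‖ ≤ (1 - a ^ 2) * (s * s ^ n) := by
    intro n
    rw [norm_mul, norm_pow, ← hsdef]
    have h1 : s ^ (n + 1) = s * s ^ n := by ring
    calc ‖c (n + 1)‖ * s ^ (n + 1) ≤ (1 - a ^ 2) * s ^ (n + 1) := by
          apply mul_le_mul_of_nonneg_right (hcoeff n) (by positivity)
    _ = (1 - a ^ 2) * (s * s ^ n) := by rw [h1]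
  have hgeo : Summable (fun n : ℕ => (1 - a ^ 2) * (s * s ^ n)) := by
    apply Summable.mul_left
    apply Summable.mul_left
    exact summable_geometric_of_lt_one hs0 (by linarith)
  have htail : ∑' n, ‖c (n + 1) * z ^ (n + 1)‖ ≤ ∑' n : ℕ, (1 - a ^ 2) * (s * s ^ n) := by
    apply Summable.tsum_le_tsum hterm ((summable_nat_add_iff 1).2 hsum) hgeo
  have hgeoval : ∑' n : ℕ, (1 - a ^ 2) * (s * s ^ n) = (1 - a ^ 2) * (s * (1 - s)⁻¹) := by
    rw [tsum_mul_left]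
    congr 1
    rw [tsum_mul_left]
    congr 1
    exact tsum_geometric_of_lt_one hs0 (by linarith)
  rw [hgeoval] at htail
  have ht : s * (1 - s)⁻¹ < 1 / 2 := by
    rw [← div_eq_mul_inv, div_lt_iff₀ h1s]
    simp only [hsdef] at *
    linarith
  have ht0 : 0 ≤ s * (1 - s)⁻¹ := by positivity
  have ha2 : 0 < 1 - a ^ 2 := by nlinarith
  nlinarith [mul_lt_mul_of_pos_left ht ha2, sq_nonneg (1 - a), htail]
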